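/- arXiv:1810.08275 — 5 statements merged into one kernel-verified Lean document; each statement's English description precedes it below -/
import Mathlib

section
/- Let a₋ = (1/√2)(d/dx + x) and a₊ = (1/√2)(-d/dx + x) act on the Hermite functions ψₙ. Define Q₀ = (1/√2)(a₋Π₀ + Π₀a₊) with Π₀ = (1/2)(1+R). Then the functions ψ⁽⁰⁾_{n,ε} = (1/2)(ψ_{2n+1} + ε ψ_{2n+2}), ε = ±1, satisfy Q₀ ψ⁽⁰⁾_{n,ε} = ε√(n+1) ψ⁽⁰⁾_{n,ε}. -/
theorem stmt_4 {V : Type*} [AddCommGroup V] [Module ℝ V]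
    (ψ : ℕ → V) (am ap R : Module.End ℝ V)
    (ham : ∀ n : ℕ, am (ψ n) = Real.sqrt n • ψ (n - 1))
    (hap : ∀ n : ℕ, ap (ψ n) = Real.sqrt (n + 1) • ψ (n + 1))
    (hR : ∀ n : ℕ, R (ψ n) = ((-1 : ℝ)) ^ n • ψ n)
    (Pi0 : Module.End ℝ V) (hPi0 : Pi0 = (1/2 : ℝ) • (1 + R))
    (Q0 : Module.End ℝ V) (hQ0 : Q0 = (Real.sqrt 2)⁻¹ • (am * Pi0 + Pi0 * ap))
    (n : ℕ) (ε : ℝ) (hε : ε = 1 ∨ ε = -1) :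
    Q0 ((1/2 : ℝ) • (ψ (2 * n + 1) + ε • ψ (2 * n + 2)))
      = (ε * Real.sqrt (n + 1)) • ((1/2 : ℝ) • (ψ (2 * n + 1) + ε • ψ (2 * n + 2))) := by
  have hε2 : ε * ε = 1 := by rcases hε with h | h <;> simp [h]
  have hodd : ((-1 : ℝ)) ^ (2 * n + 1) = -1 := by
    simp [pow_succ, pow_mul]
  have heven : ((-1 : ℝ)) ^ (2 * n + 2) = 1 := by
    simp [pow_succ, pow_mul]
  have heven3 : ((-1 : ℝ)) ^ (2 * n + 3) = -1 := by
    simp [pow_succ, pow_mul]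
  have hs : Real.sqrt ((2 * n + 2 : ℕ)) = Real.sqrt 2 * Real.sqrt (n + 1) := by
    rw [← Real.sqrt_mul (by norm_num)]
    congr 1; push_cast; ring
  have h2 : (Real.sqrt 2)⁻¹ * Real.sqrt 2 = 1 :=
    inv_mul_cancel₀ (by positivity)
  subst hQ0 hPi0
  simp only [Module.End.mul_apply, LinearMap.smul_apply, LinearMap.add_apply,
    Module.End.one_apply, map_add, map_smul, ham, hap, hR, hodd, heven, heven3]
  push_cast
  have hs1 : Real.sqrt (2*(n:ℝ)+1+1) = Real.sqrt 2 * Real.sqrt ((n:ℝ)+1) := by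
    rw [← Real.sqrt_mul (by norm_num)]; ring_nf
  have hs2 : Real.sqrt (2*(n:ℝ)+2) = Real.sqrt 2 * Real.sqrt ((n:ℝ)+1) := by
    rw [← Real.sqrt_mul (by norm_num)]; ring_nf
  simp only [hs1, hs2, show 2*n+1+1 = 2*n+2 from rfl, show 2*n+2+1 = 2*n+3 from rfl]
  match_scalars <;> field_simp <;> ring_nf <;> simp [pow_two, hε2]
end

section
/- Define Q₁ = (1/√2)(a₋Π₁ + Π₁a₊) with Π₁ = (1/2)(1-R). Then ψ⁽¹⁾_{n,ε} = (1/2)(ψ_{2n} + ε ψ_{2n+1}), ε = ±1, satisfies Q₁ ψ⁽¹⁾_{n,ε} = ε√(n+1/2) ψ⁽¹⁾_{n,ε}. -/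
theorem stmt_5 {V : Type*} [AddCommGroup V] [Module ℝ V]
    (ψ : ℕ → V) (am ap R : Module.End ℝ V)
    (ham : ∀ n : ℕ, am (ψ n) = Real.sqrt n • ψ (n - 1))
    (hap : ∀ n : ℕ, ap (ψ n) = Real.sqrt (n + 1) • ψ (n + 1))
    (hR : ∀ n : ℕ, R (ψ n) = ((-1 : ℝ)) ^ n • ψ n)
    (Pi1 : Module.End ℝ V) (hPi1 : Pi1 = (1/2 : ℝ) • (1 - R))
    (Q1 : Module.End ℝ V) (hQ1 : Q1 = (Real.sqrt 2)⁻¹ • (am * Pi1 + Pi1 * ap))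
    (n : ℕ) (ε : ℝ) (hε : ε = 1 ∨ ε = -1) :
    Q1 ((1/2 : ℝ) • (ψ (2 * n) + ε • ψ (2 * n + 1)))
      = (ε * Real.sqrt ((n : ℝ) + 1/2)) • ((1/2 : ℝ) • (ψ (2 * n) + ε • ψ (2 * n + 1))) := by
  have hPe : ∀ k : ℕ, Pi1 (ψ (2 * k)) = 0 := by
    intro k
    simp [hPi1, LinearMap.sub_apply, hR, pow_mul]
  have hPo : ∀ k : ℕ, Pi1 (ψ (2 * k + 1)) = ψ (2 * k + 1) := by
    intro k
    have : ((-1 : ℝ)) ^ (2 * k + 1) = -1 := by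
      rw [pow_succ, pow_mul]; norm_num
    simp [hPi1, LinearMap.sub_apply, hR, this, smul_sub, smul_smul]
    module
  have key : Real.sqrt (((2 * n : ℕ) : ℝ) + 1) = Real.sqrt 2 * Real.sqrt ((n:ℝ) + 1/2) := by
    rw [← Real.sqrt_mul (by norm_num)]
    congr 1; push_cast; ring
  have key' : Real.sqrt ((2 * n + 1 : ℕ) : ℝ) = Real.sqrt 2 * Real.sqrt ((n:ℝ) + 1/2) := by
    rw [← key]; norm_num
  have h2 : Real.sqrt 2 * Real.sqrt 2 = 2 := Real.mul_self_sqrt (by norm_num)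
  have h2' : Real.sqrt 2 ≠ 0 := by positivity
  have hamQ : am (ψ (2 * n + 1)) = (Real.sqrt 2 * Real.sqrt ((n:ℝ) + 1/2)) • ψ (2 * n) := by
    rw [ham, key', Nat.add_sub_cancel]
  have hapQ : ap (ψ (2 * n)) = (Real.sqrt 2 * Real.sqrt ((n:ℝ) + 1/2)) • ψ (2 * n + 1) := by
    rw [hap, key]
  subst hQ1
  simp only [LinearMap.smul_apply, LinearMap.add_apply, Module.End.mul_apply,
    map_add, map_smul, hPe, hPo, hamQ, hapQ, hap, smul_zero, map_zero, add_zero, zero_add]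
  have h2n2 : Pi1 (ψ (2 * n + 1 + 1)) = 0 := by
    have := hPe (n + 1); rw [show 2 * (n + 1) = 2 * n + 1 + 1 by ring] at this; exact this
  rw [h2n2]
  have hi : (Real.sqrt 2)⁻¹ * Real.sqrt 2 = 1 := inv_mul_cancel₀ h2'
  generalize Real.sqrt ((n:ℝ) + 1/2) = s at hamQ hapQ ⊢
  rcases hε with rfl | rfl <;>
  · match_scalars <;>
    first
    | linear_combination (s/2) * hi
    | linear_combination (-(s/2)) * hi
end

section
/- The associated Hermite polynomials satisfy the connection formula Hₙ(x,c) = Σ_{k=0}^{⌊n/2⌋} ((-2)^k (c)_k (n-k)! / (k! (n-2k)!)) H_{n-2k}(x), where (c)_k denotes the Pochhammer symbol and Hₘ(x) are the ordinary physicists' Hermite polynomials. -/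
/-- Associated Hermite polynomials `Hₙ(x,c)`. -/
noncomputable def assocHermite : ℕ → ℝ → ℝ → ℝ
  | 0, _, _ => 1
  | 1, x, _ => 2 * x
  | (n + 2), x, c => 2 * x * assocHermite (n + 1) x c - 2 * ((n + 1 : ℕ) + c) * assocHermite n x c

/-- Physicists' Hermite polynomials `Hₘ(x)` (the case `c = 0`). -/
noncomputable def hermiteP : ℕ → ℝ → ℝ
  | 0, _ => 1
  | 1, x => 2 * x
  | (n + 2), x => 2 * x * hermiteP (n + 1) x - 2 * (n + 1) * hermiteP n x

noncomputable def A (c : ℝ) (n k : ℕ) : ℝ :=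
  (-2 : ℝ) ^ k * (ascPochhammer ℝ k).eval c * (n - k).factorial /
    (k.factorial * (n - 2 * k).factorial)

lemma A_zero (c : ℝ) (n : ℕ) : A c n 0 = 1 := by
  simp only [A, pow_zero, ascPochhammer_zero, Polynomial.eval_one, Nat.sub_zero,
    Nat.factorial_zero, Nat.cast_one, one_mul, mul_one, Nat.mul_zero, Nat.zero_mul]
  rw [div_self (Nat.cast_ne_zero.2 n.factorial_ne_zero)]

lemma hmul (m : ℕ) (x : ℝ) :
    2*x*hermiteP m x = hermiteP (m+1) x + 2*(m:ℝ)*hermiteP (m-1) x := by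
  cases m with
  | zero => simp [hermiteP]
  | succ k =>
      rw [show k+1+1 = k+2 from rfl, hermiteP]
      push_cast; ring

lemma key4 (i d : ℕ) (c : ℝ) :
    (-2:ℝ)^(i+1) * (ascPochhammer ℝ (i+1)).eval c * (i+d+2).factorial / ((i+1).factorial * (d+1).factorial)
    = (-2:ℝ)^(i+1) * (ascPochhammer ℝ (i+1)).eval c * (i+d+1).factorial / ((i+1).factorial * d.factorial)
    + 2*((d:ℝ)+2) * ((-2:ℝ)^i * (ascPochhammer ℝ i).eval c * (i+d+2).factorial / (i.factorial * (d+2).factorial))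
    - 2*(((2*i+d+2 : ℕ):ℝ) + c) * ((-2:ℝ)^i * (ascPochhammer ℝ i).eval c * (i+d+1).factorial / (i.factorial * (d+1).factorial)) := by
  have h1 : ((i+d+2).factorial : ℝ) = (i+d+2) * (i+d+1).factorial := by
    rw [show i+d+2 = (i+d+1)+1 by ring, Nat.factorial_succ]; push_cast; ring
  have h2 : ((d+2).factorial : ℝ) = (d+2) * (d+1).factorial := by
    rw [show d+2 = (d+1)+1 from rfl, Nat.factorial_succ]; push_cast; ring
  have h3 : ((d+1).factorial : ℝ) = (d+1) * d.factorial := by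
    rw [Nat.factorial_succ]; push_cast; ring
  have h4 : ((i+1).factorial : ℝ) = (i+1) * i.factorial := by
    rw [Nat.factorial_succ]; push_cast; ring
  have hi : (i.factorial : ℝ) ≠ 0 := Nat.cast_ne_zero.2 i.factorial_ne_zero
  have hd : (d.factorial : ℝ) ≠ 0 := Nat.cast_ne_zero.2 d.factorial_ne_zero
  have hi1 : ((i:ℝ)+1) ≠ 0 := by positivity
  have hd1 : ((d:ℝ)+1) ≠ 0 := by positivity
  have hd2 : ((d:ℝ)+2) ≠ 0 := by positivity
  rw [ascPochhammer_succ_eval, h1, h2, h3, h4]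
  push_cast
  field_simp
  ring

lemma A_rec (i d : ℕ) (c : ℝ) :
    A c (2*i+d+3) (i+1)
    = A c (2*i+d+2) (i+1) + 2*((d:ℝ)+2) * A c (2*i+d+2) i
      - 2*(((2*i+d+2 : ℕ):ℝ) + c) * A c (2*i+d+1) i := by
  have e1 : 2*i+d+3 - (i+1) = i+d+2 := by omega
  have e2 : 2*i+d+3 - 2*(i+1) = d+1 := by omega
  have e3 : 2*i+d+2 - (i+1) = i+d+1 := by omega
  have e4 : 2*i+d+2 - 2*(i+1) = d := by omega
  have e5 : 2*i+d+2 - i = i+d+2 := by omega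
  have e6 : 2*i+d+2 - 2*i = d+2 := by omega
  have e7 : 2*i+d+1 - i = i+d+1 := by omega
  have e8 : 2*i+d+1 - 2*i = d+1 := by omega
  simp only [A, e1, e2, e3, e4, e5, e6, e7, e8]
  exact key4 i d c

lemma key3 (m : ℕ) (c : ℝ) :
    A c (2*m+2) (m+1)
    = 2*((1:ℕ):ℝ) * A c (2*m+1) m - 2*(((2*m+1 : ℕ):ℝ) + c) * A c (2*m) m := by
  have e1 : 2*m+2 - (m+1) = m+1 := by omega
  have e2 : 2*m+2 - 2*(m+1) = 0 := by omega
  have e3 : 2*m+1 - m = m+1 := by omega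
  have e4 : 2*m+1 - 2*m = 1 := by omega
  have e5 : 2*m - m = m := by omega
  have e6 : 2*m - 2*m = 0 := by omega
  simp only [A, e1, e2, e3, e4, e5, e6]
  have h4 : ((m+1).factorial : ℝ) = (m+1) * m.factorial := by
    rw [Nat.factorial_succ]; push_cast; ring
  have hm : (m.factorial : ℝ) ≠ 0 := Nat.cast_ne_zero.2 m.factorial_ne_zero
  have hm1 : ((m:ℝ)+1) ≠ 0 := by positivity
  rw [ascPochhammer_succ_eval, h4]
  simp only [Nat.factorial_zero, Nat.factorial_one]
  push_cast
  field_simp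
  ring

lemma main (x c : ℝ) (n : ℕ) :
    assocHermite n x c = ∑ k ∈ Finset.range (n/2+1), A c n k * hermiteP (n - 2*k) x := by
  induction n using Nat.twoStepInduction with
  | zero => norm_num [assocHermite, A_zero, Finset.sum_range_one]; rw [show hermiteP 0 x = 1 from rfl]
  | one => norm_num [assocHermite, A_zero, Finset.sum_range_one]; rw [show hermiteP 1 x = 2*x from rfl]
  | more n ih1 ih2 =>
    rw [assocHermite, ih1, ih2]
    rcases Nat.even_or_odd n with h | h
    · obtain ⟨m', hm'⟩ := h
      obtain ⟨m, rfl⟩ : ∃ m, n = 2*m := ⟨m', by omega⟩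
      rw [show (2*m+2)/2+1 = m+2 by omega, show (2*m+1)/2+1 = m+1 by omega,
        show (2*m)/2+1 = m+1 by omega]
      have step1 : ∀ k ∈ Finset.range (m+1),
          2*x*(A c (2*m+1) k * hermiteP (2*m+1 - 2*k) x)
            = A c (2*m+1) k * hermiteP (2*m+2 - 2*k) x
              + (2*((2*m+1-2*k : ℕ):ℝ) * A c (2*m+1) k) * hermiteP (2*m - 2*k) x := by
        intro k hk
        have hk' : k ≤ m := Nat.lt_succ_iff.mp (Finset.mem_range.mp hk)
        have e1 : (2*m+1-2*k)+1 = 2*m+2-2*k := by omega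
        have e2 : (2*m+1-2*k)-1 = 2*m-2*k := by omega
        calc 2*x*(A c (2*m+1) k * hermiteP (2*m+1 - 2*k) x)
            = A c (2*m+1) k * (2*x*hermiteP (2*m+1 - 2*k) x) := by ring
          _ = A c (2*m+1) k * (hermiteP (2*m+2-2*k) x
                + 2*((2*m+1-2*k : ℕ):ℝ)*hermiteP (2*m-2*k) x) := by rw [hmul, e1, e2]
          _ = _ := by ring
      rw [Finset.mul_sum, Finset.mul_sum, Finset.sum_congr rfl step1,
        Finset.sum_add_distrib, add_sub_assoc, ← Finset.sum_sub_distrib]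
      rw [Finset.sum_range_succ' (fun j => A c (2*m+2) j * hermiteP (2*m+2 - 2*j) x) (m+1),
        Finset.sum_range_succ' (fun k => A c (2*m+1) k * hermiteP (2*m+2 - 2*k) x) m,
        Finset.sum_range_succ (fun j => A c (2*m+2) (j+1) * hermiteP (2*m+2 - 2*(j+1)) x) m,
        Finset.sum_range_succ (fun k =>
          (2*((2*m+1-2*k : ℕ):ℝ) * A c (2*m+1) k) * hermiteP (2*m - 2*k) x
          - 2*(((2*m+1 : ℕ):ℝ)+c) * (A c (2*m) k * hermiteP (2*m - 2*k) x)) m]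
      have hb : A c (2*m+2) (m+1) * hermiteP (2*m+2 - 2*(m+1)) x
          = (2*((2*m+1-2*m : ℕ):ℝ) * A c (2*m+1) m) * hermiteP (2*m - 2*m) x
            - 2*(((2*m+1 : ℕ):ℝ)+c) * (A c (2*m) m * hermiteP (2*m - 2*m) x) := by
        rw [show 2*m+2-2*(m+1) = 0 by omega, show 2*m-2*m = 0 by omega,
          show 2*m+1-2*m = 1 by omega]
        linear_combination (hermiteP 0 x) * key3 m c
      have hmain : ∀ j ∈ Finset.range m,
          A c (2*m+2) (j+1) * hermiteP (2*m+2 - 2*(j+1)) x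
          = A c (2*m+1) (j+1) * hermiteP (2*m+2 - 2*(j+1)) x
            + ((2*((2*m+1-2*j : ℕ):ℝ) * A c (2*m+1) j) * hermiteP (2*m - 2*j) x
              - 2*(((2*m+1 : ℕ):ℝ)+c) * (A c (2*m) j * hermiteP (2*m - 2*j) x)) := by
        intro j hj
        have hj' : j < m := Finset.mem_range.mp hj
        obtain ⟨d, rfl⟩ : ∃ d, m = j + d + 1 := ⟨m - j - 1, by omega⟩
        rw [show 2*(j+d+1)+2 - 2*(j+1) = 2*d+2 by omega,
          show 2*(j+d+1) - 2*j = 2*d+2 by omega,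
          show 2*(j+d+1)+1 - 2*j = 2*d+3 by omega,
          show 2*(j+d+1)+2 = 2*j+(2*d+1)+3 by ring,
          show 2*(j+d+1)+1 = 2*j+(2*d+1)+2 by ring,
          show 2*(j+d+1) = 2*j+(2*d+1)+1 by ring]
        linear_combination (norm := (push_cast; ring1))
          (hermiteP (2*d+2) x) * A_rec j (2*d+1) c
      rw [Finset.sum_congr rfl hmain, Finset.sum_add_distrib, A_zero, A_zero, hb]
      ring
    · obtain ⟨m, rfl⟩ : ∃ m, n = 2*m+1 := by
        obtain ⟨m', hm'⟩ := h; exact ⟨m', by omega⟩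
      rw [show 2*m+1+2 = 2*m+3 by ring, show 2*m+1+1 = 2*m+2 by ring]
      rw [show (2*m+3)/2+1 = m+2 by omega, show (2*m+2)/2+1 = m+2 by omega,
        show (2*m+1)/2+1 = m+1 by omega]
      have step1 : ∀ k ∈ Finset.range (m+2),
          2*x*(A c (2*m+2) k * hermiteP (2*m+2 - 2*k) x)
            = A c (2*m+2) k * hermiteP (2*m+3 - 2*k) x
              + (2*((2*m+2-2*k : ℕ):ℝ) * A c (2*m+2) k) * hermiteP (2*m+1 - 2*k) x := by
        intro k hk
        have hk' : k ≤ m+1 := Nat.lt_succ_iff.mp (Finset.mem_range.mp hk)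
        have e1 : (2*m+2-2*k)+1 = 2*m+3-2*k := by omega
        have e2 : (2*m+2-2*k)-1 = 2*m+1-2*k := by omega
        calc 2*x*(A c (2*m+2) k * hermiteP (2*m+2 - 2*k) x)
            = A c (2*m+2) k * (2*x*hermiteP (2*m+2 - 2*k) x) := by ring
          _ = A c (2*m+2) k * (hermiteP (2*m+3-2*k) x
                + 2*((2*m+2-2*k : ℕ):ℝ)*hermiteP (2*m+1-2*k) x) := by rw [hmul, e1, e2]
          _ = _ := by ring
      rw [Finset.mul_sum, Finset.mul_sum, Finset.sum_congr rfl step1,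
        Finset.sum_add_distrib]
      rw [Finset.sum_range_succ (fun k =>
        (2*((2*m+2-2*k : ℕ):ℝ) * A c (2*m+2) k) * hermiteP (2*m+1 - 2*k) x) (m+1)]
      have hz : (2*((2*m+2-2*(m+1) : ℕ):ℝ) * A c (2*m+2) (m+1)) * hermiteP (2*m+1 - 2*(m+1)) x = 0 := by
        rw [show 2*m+2-2*(m+1) = 0 by omega]; norm_num
      rw [hz, add_zero, add_sub_assoc, ← Finset.sum_sub_distrib]
      rw [Finset.sum_range_succ' (fun j => A c (2*m+3) j * hermiteP (2*m+3 - 2*j) x) (m+1),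
        Finset.sum_range_succ' (fun k => A c (2*m+2) k * hermiteP (2*m+3 - 2*k) x) (m+1)]
      have hmain : ∀ j ∈ Finset.range (m+1),
          A c (2*m+3) (j+1) * hermiteP (2*m+3 - 2*(j+1)) x
          = A c (2*m+2) (j+1) * hermiteP (2*m+3 - 2*(j+1)) x
            + ((2*((2*m+2-2*j : ℕ):ℝ) * A c (2*m+2) j) * hermiteP (2*m+1 - 2*j) x
              - 2*(((2*m+2 : ℕ):ℝ)+c) * (A c (2*m+1) j * hermiteP (2*m+1 - 2*j) x)) := by
        intro j hj
        have hj' : j ≤ m := Nat.lt_succ_iff.mp (Finset.mem_range.mp hj)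
        obtain ⟨d, rfl⟩ : ∃ d, m = j + d := ⟨m - j, by omega⟩
        rw [show 2*(j+d)+3 - 2*(j+1) = 2*d+1 by omega,
          show 2*(j+d)+1 - 2*j = 2*d+1 by omega,
          show 2*(j+d)+2 - 2*j = 2*d+2 by omega,
          show 2*(j+d)+3 = 2*j+2*d+3 by ring,
          show 2*(j+d)+2 = 2*j+2*d+2 by ring,
          show 2*(j+d)+1 = 2*j+2*d+1 by ring]
        linear_combination (norm := (push_cast; ring1))
          (hermiteP (2*d+1) x) * A_rec j (2*d) c
      rw [Finset.sum_congr rfl hmain, Finset.sum_add_distrib, A_zero, A_zero]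
      ring

theorem stmt_7 (n : ℕ) (x c : ℝ) :
    assocHermite n x c =
      ∑ k ∈ Finset.range (n / 2 + 1),
        (-2 : ℝ) ^ k * (ascPochhammer ℝ k).eval c * (n - k).factorial /
          (k.factorial * (n - 2 * k).factorial) * hermiteP (n - 2 * k) x := by
  simpa [A] using main x c n
end

section
/- Define Hⱼ = a₊a₋ + Σ_{k=0}^{r-1}(1+k-r/2)Π_{r+j-k-1 mod r} on the span of the basis of ℓ²(ℕ). Then Hⱼ|nr+j+s⟩ = (rn + r/2 + j)|nr+j+s⟩ for all n ∈ ℕ and s = 0,...,r-1; in particular each eigenvalue of Hⱼ is r-fold degenerate. -/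
theorem stmt_16 (r : ℕ) (hr : 2 ≤ r) (j : ℕ) (hj : j < r)
    (am ap : Module.End ℝ (ℕ →₀ ℝ))
    (ham : ∀ n : ℕ, am (Finsupp.single n (1 : ℝ)) = Real.sqrt n • Finsupp.single (n - 1) (1 : ℝ))
    (hap : ∀ n : ℕ, ap (Finsupp.single n (1 : ℝ)) = Real.sqrt (n + 1) • Finsupp.single (n + 1) (1 : ℝ))
    (P : ℕ → Module.End ℝ (ℕ →₀ ℝ))
    (hP : ∀ m n : ℕ, P m (Finsupp.single n (1 : ℝ)) =
      if n % r = m % r then Finsupp.single n (1 : ℝ) else 0)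
    (Hj : Module.End ℝ (ℕ →₀ ℝ))
    (hHj : Hj = ap * am +
      ∑ k ∈ Finset.range r, ((1 : ℝ) + k - r / 2) • P ((r + j - k - 1) % r)) :
    ∀ n : ℕ, ∀ s < r,
      Hj (Finsupp.single (n * r + j + s) (1 : ℝ)) =
        ((r : ℝ) * n + r / 2 + j) • Finsupp.single (n * r + j + s) (1 : ℝ) := by
  intro n s hs
  set N := n * r + j + s with hNdef
  subst hHj
  -- number operator part
  have hnum : ap (am (Finsupp.single N (1 : ℝ))) = (N : ℝ) • Finsupp.single N (1 : ℝ) := by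
    rw [ham, map_smul, hap]
    rcases Nat.eq_zero_or_pos N with h | h
    · simp [h]
    · have h1 : N - 1 + 1 = N := Nat.sub_add_cancel h
      have h2 : ((N - 1 : ℕ) : ℝ) + 1 = (N : ℝ) := by
        rw [Nat.cast_pred h]; ring
      rw [h1, h2, smul_smul]
      congr 1
      exact Real.mul_self_sqrt (by positivity)
  -- which projector fires
  have hcond : ∀ k ∈ Finset.range r, (N % r = (r + j - k - 1) % r % r) ↔ k = r - 1 - s := by
    intro k hk
    rw [Finset.mem_range] at hk
    rw [Nat.mod_mod_of_dvd _ dvd_rfl]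
    have h1 : N % r = (j + s) % r := by
      rw [show N = j + s + n * r by omega, Nat.add_mul_mod_self_right]
    have h2 : r + j - k - 1 = j + (r - 1 - k) := by omega
    rw [h1, h2]
    constructor
    · intro h
      have h3 : s ≡ r - 1 - k [MOD r] := (Nat.ModEq.add_left_cancel' j h)
      have h4 : s % r = (r - 1 - k) % r := h3
      rw [Nat.mod_eq_of_lt hs, Nat.mod_eq_of_lt (by omega)] at h4
      omega
    · intro h
      subst h
      congr 1
      omega
  -- the projector sum
  have hsum : ∀ k ∈ Finset.range r,
      (((1 : ℝ) + k - r / 2) • P ((r + j - k - 1) % r)) (Finsupp.single N (1 : ℝ)) =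
      if k = r - 1 - s then ((1 : ℝ) + k - r / 2) • Finsupp.single N (1 : ℝ) else 0 := by
    intro k hk
    rw [LinearMap.smul_apply, hP]
    rcases em (k = r - 1 - s) with h | h
    · rw [if_pos ((hcond k hk).mpr h), if_pos h]
    · rw [if_neg (fun c => h ((hcond k hk).mp c)), if_neg h, smul_zero]
  have key : (∑ k ∈ Finset.range r, ((1 : ℝ) + k - r / 2) • P ((r + j - k - 1) % r))
      (Finsupp.single N (1 : ℝ)) =
      ((1 : ℝ) + (r - 1 - s : ℕ) - r / 2) • Finsupp.single N (1 : ℝ) := by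
    rw [LinearMap.sum_apply, Finset.sum_congr rfl hsum, Finset.sum_ite_eq' (Finset.range r)]
    rw [if_pos (Finset.mem_range.mpr (by omega))]
  rw [LinearMap.add_apply, Module.End.mul_apply, hnum, key, ← add_smul]
  congr 1
  have : ((r - 1 - s : ℕ) : ℝ) = (r : ℝ) - 1 - s := by
    rw [Nat.cast_sub (show s ≤ r - 1 by omega), Nat.cast_sub (show 1 ≤ r by omega)]
    norm_num
  rw [this, hNdef]
  push_cast
  ring
end

section
/- With Q_{j-} = a₋(1-Πⱼ), Q_{j+} = a₊(1-Π_{j-1}), and Hⱼ as above, the commutation relations [Hⱼ, Q_{j-}] = 0 and [Hⱼ, Q_{j+}] = 0 hold on the span of basis vectors. -/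
theorem stmt_17 (r : ℕ) (hr : 2 ≤ r) (j : ℕ) (hj : j < r)
    (am ap : Module.End ℝ (ℕ →₀ ℝ))
    (ham : ∀ n : ℕ, am (Finsupp.single n (1 : ℝ)) = Real.sqrt n • Finsupp.single (n - 1) (1 : ℝ))
    (hap : ∀ n : ℕ, ap (Finsupp.single n (1 : ℝ)) = Real.sqrt (n + 1) • Finsupp.single (n + 1) (1 : ℝ))
    (P : ℕ → Module.End ℝ (ℕ →₀ ℝ))
    (hP : ∀ m n : ℕ, P m (Finsupp.single n (1 : ℝ)) =
      if n % r = m % r then Finsupp.single n (1 : ℝ) else 0)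
    (Hj : Module.End ℝ (ℕ →₀ ℝ))
    (hHj : Hj = ap * am +
      ∑ k ∈ Finset.range r, ((1 : ℝ) + k - r / 2) • P ((r + j - k - 1) % r)) :
    Hj * (am * (1 - P j)) - (am * (1 - P j)) * Hj = 0 ∧
    Hj * (ap * (1 - P ((j + r - 1) % r))) - (ap * (1 - P ((j + r - 1) % r))) * Hj = 0 := by
  have hr1 : 0 < r := by omega
  -- explicit formula for the residue function
  have hK : ∀ m, m < r → (r + j - 1 - m) % r = if m < j then j - 1 - m else r + j - 1 - m := by
    intro m hm
    by_cases h : m < j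
    · rw [show r + j - 1 - m = r + (j - 1 - m) by omega, Nat.add_mod_left,
        Nat.mod_eq_of_lt (by omega), if_pos h]
    · rw [Nat.mod_eq_of_lt (by omega), if_neg h]
  have hsucc : ∀ n : ℕ, (n + 1) % r = (n % r + 1) % r := by
    intro n
    conv_lhs => rw [show n + 1 = r * (n / r) + (n % r + 1) from by
      have := Nat.div_add_mod n r; omega]
    rw [Nat.mul_add_mod]
  have hs1 : ∀ s, s < r → (s + 1) % r = if s + 1 = r then 0 else s + 1 := by
    intro s hs
    by_cases h : s + 1 = r
    · rw [if_pos h, h, Nat.mod_self]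
    · rw [if_neg h, Nat.mod_eq_of_lt (by omega)]
  have hstep : ∀ m : ℕ, (m + 1) % r ≠ j →
      (r + j - 1 - m % r) % r = (r + j - 1 - (m + 1) % r) % r + 1 := by
    intro m hne
    have hs : m % r < r := Nat.mod_lt _ hr1
    rw [hsucc, hs1 (m % r) hs] at hne ⊢
    by_cases hc : m % r + 1 = r
    · rw [if_pos hc] at hne ⊢
      rw [hK (m % r) hs, hK 0 hr1]
      split_ifs <;> omega
    · rw [if_neg hc] at hne ⊢
      rw [hK (m % r) hs, hK (m % r + 1) (by omega)]
      split_ifs <;> omega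
  have hshift : ∀ n : ℕ, n % r ≠ (j + r - 1) % r → (n + 1) % r ≠ j := by
    intro n h hc
    apply h
    have hs : n % r < r := Nat.mod_lt _ hr1
    have hjr : (j + r - 1) % r = if j = 0 then r - 1 else j - 1 := by
      by_cases hj0 : j = 0
      · rw [if_pos hj0, hj0, show 0 + r - 1 = r - 1 from by omega,
          Nat.mod_eq_of_lt (by omega)]
      · rw [if_neg hj0, show j + r - 1 = r + (j - 1) from by omega, Nat.add_mod_left,
          Nat.mod_eq_of_lt (by omega)]
    rw [hsucc, hs1 (n % r) hs] at hc
    rw [hjr]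
    split_ifs at hc ⊢ <;> omega
  -- diagonal action of Hj
  have hdiag : ∀ n : ℕ, Hj (Finsupp.single n (1 : ℝ)) =
      ((n : ℝ) + (1 + ((r + j - 1 - n % r) % r : ℕ) - (r : ℝ) / 2)) • Finsupp.single n 1 := by
    intro n
    have hs : n % r < r := Nat.mod_lt _ hr1
    have hKn : (r + j - 1 - n % r) % r < r := Nat.mod_lt _ hr1
    have hcond : n % r = (r + j - ((r + j - 1 - n % r) % r) - 1) % r := by
      rw [show r + j - ((r + j - 1 - n % r) % r) - 1
          = r + j - 1 - ((r + j - 1 - n % r) % r) from by omega, hK _ hKn, hK _ hs]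
      split_ifs <;> omega
    have hap2 : Real.sqrt n • (Real.sqrt (((n - 1 : ℕ) : ℝ) + 1) •
        Finsupp.single (n - 1 + 1) (1 : ℝ)) = (n : ℝ) • Finsupp.single n 1 := by
      cases n with
      | zero => simp
      | succ m =>
        simp only [Nat.add_sub_cancel, smul_smul]
        rw [show ((m + 1 : ℕ) : ℝ) = (m : ℝ) + 1 from by push_cast; ring,
          Real.mul_self_sqrt (by positivity)]
    have hsum : ∑ k ∈ Finset.range r, ((1 : ℝ) + (k : ℝ) - (r : ℝ) / 2) •
        (if n % r = (r + j - k - 1) % r then Finsupp.single n (1 : ℝ) else 0)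
        = ((1 : ℝ) + (((r + j - 1 - n % r) % r : ℕ) : ℝ) - (r : ℝ) / 2) •
          Finsupp.single n (1 : ℝ) := by
      rw [Finset.sum_eq_single_of_mem _ (Finset.mem_range.mpr hKn)]
      · rw [if_pos hcond]
      · intro k hk hkne
        rw [if_neg, smul_zero]
        intro hc
        apply hkne
        have hkr : k < r := Finset.mem_range.mp hk
        rw [show r + j - k - 1 = r + j - 1 - k from by omega, hK k hkr] at hc
        rw [hK (n % r) hs]
        split_ifs at hc ⊢ <;> omega
    rw [hHj, LinearMap.add_apply, Module.End.mul_apply, ham, map_smul, hap,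
      LinearMap.sum_apply]
    simp only [LinearMap.smul_apply, hP, Nat.mod_mod_of_dvd _ dvd_rfl]
    rw [hap2, hsum, ← add_smul]
  -- extensionality helper
  have ext1 : ∀ A B : Module.End ℝ (ℕ →₀ ℝ),
      (∀ n, A (Finsupp.single n (1 : ℝ)) = B (Finsupp.single n (1 : ℝ))) → A = B := by
    intro A B h
    refine Finsupp.lhom_ext fun a b => ?_
    have hb : Finsupp.single a b = b • Finsupp.single a (1 : ℝ) := by
      rw [Finsupp.smul_single, smul_eq_mul, mul_one]
    rw [hb, map_smul, map_smul, h]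
  have hQm : ∀ n : ℕ, (am * (1 - P j)) (Finsupp.single n (1 : ℝ)) =
      if n % r = j then 0 else Real.sqrt n • Finsupp.single (n - 1) (1 : ℝ) := by
    intro n
    rw [Module.End.mul_apply, LinearMap.sub_apply, Module.End.one_apply, hP,
      Nat.mod_eq_of_lt hj]
    by_cases h : n % r = j
    · rw [if_pos h, if_pos h, sub_self, map_zero]
    · rw [if_neg h, if_neg h, sub_zero, ham]
  have hQp : ∀ n : ℕ, (ap * (1 - P ((j + r - 1) % r))) (Finsupp.single n (1 : ℝ)) =
      if n % r = (j + r - 1) % r then 0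
      else Real.sqrt (n + 1) • Finsupp.single (n + 1) (1 : ℝ) := by
    intro n
    rw [Module.End.mul_apply, LinearMap.sub_apply, Module.End.one_apply, hP,
      Nat.mod_mod_of_dvd _ dvd_rfl]
    by_cases h : n % r = (j + r - 1) % r
    · rw [if_pos h, if_pos h, sub_self, map_zero]
    · rw [if_neg h, if_neg h, sub_zero, hap]
  constructor
  · refine sub_eq_zero_of_eq (ext1 _ _ fun n => ?_)
    show Hj ((am * (1 - P j)) (Finsupp.single n 1))
      = (am * (1 - P j)) (Hj (Finsupp.single n 1))
    rw [hQm n, hdiag n, map_smul, hQm n]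
    by_cases h : n % r = j
    · rw [if_pos h, map_zero, smul_zero]
    · rw [if_neg h, map_smul, hdiag (n - 1), smul_smul, smul_smul]
      cases n with
      | zero => simp
      | succ m =>
        have hs := hstep m h
        simp only [Nat.add_sub_cancel]
        congr 1
        rw [hs]
        push_cast
        ring
  · refine sub_eq_zero_of_eq (ext1 _ _ fun n => ?_)
    show Hj ((ap * (1 - P ((j + r - 1) % r))) (Finsupp.single n 1))
      = (ap * (1 - P ((j + r - 1) % r))) (Hj (Finsupp.single n 1))
    rw [hQp n, hdiag n, map_smul, hQp n]
    by_cases h : n % r = (j + r - 1) % r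
    · rw [if_pos h, map_zero, smul_zero]
    · rw [if_neg h, map_smul, hdiag (n + 1), smul_smul, smul_smul]
      congr 1
      have hs := hstep n (hshift n h)
      rw [hs]
      push_cast
      ring
end
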